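/- On the Kodaira-Thurston manifold with almost Kähler structure (J_b, ω_b) where b = 4πl for a nonzero integer l, the (0,1)-form σ = e^{2πi l x} φ̄² is Dolbeault harmonic (Δ_{∂̄}σ = 0) but not Bott-Chern harmonic; hence H^{0,1}_{BC} is a proper subspace of H^{0,1}_{∂̄}, and there exists an almost Kähler 4-manifold and a bidegree (p,q) with H^{p,q}_{BC} ≠ H^{p,q}_{∂̄}. -/

import Mathlib

noncomputable section KT

def pt (f : ℝ × ℝ × ℝ × ℝ → ℂ) (p : ℝ × ℝ × ℝ × ℝ) : ℂ := fderiv ℝ f p (1, 0, 0, 0)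
def px (f : ℝ × ℝ × ℝ × ℝ → ℂ) (p : ℝ × ℝ × ℝ × ℝ) : ℂ := fderiv ℝ f p (0, 1, 0, 0)
def py (f : ℝ × ℝ × ℝ × ℝ → ℂ) (p : ℝ × ℝ × ℝ × ℝ) : ℂ := fderiv ℝ f p (0, 0, 1, 0)
def pz (f : ℝ × ℝ × ℝ × ℝ → ℂ) (p : ℝ × ℝ × ℝ × ℝ) : ℂ := fderiv ℝ f p (0, 0, 0, 1)

def V1 (f : ℝ × ℝ × ℝ × ℝ → ℂ) (p : ℝ × ℝ × ℝ × ℝ) : ℂ :=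
  (1/2 : ℂ) * (pt f p - Complex.I * px f p)
def V2 (b : ℝ) (f : ℝ × ℝ × ℝ × ℝ → ℂ) (p : ℝ × ℝ × ℝ × ℝ) : ℂ :=
  (1/2 : ℂ) * ((py f p + (p.2.1 : ℂ) * pz f p) + (Complex.I / (b : ℂ)) * pz f p)
def V1bar (f : ℝ × ℝ × ℝ × ℝ → ℂ) (p : ℝ × ℝ × ℝ × ℝ) : ℂ :=
  (1/2 : ℂ) * (pt f p + Complex.I * px f p)
def V2bar (b : ℝ) (f : ℝ × ℝ × ℝ × ℝ → ℂ) (p : ℝ × ℝ × ℝ × ℝ) : ℂ :=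
  (1/2 : ℂ) * ((py f p + (p.2.1 : ℂ) * pz f p) - (Complex.I / (b : ℂ)) * pz f p)

end KT

lemma gderiv (c : ℂ) (p v : ℝ × ℝ × ℝ × ℝ) :
    fderiv ℝ (fun q : ℝ × ℝ × ℝ × ℝ => Complex.exp (c * (q.2.1 : ℂ))) p v
      = Complex.exp (c * (p.2.1 : ℂ)) * c * (v.2.1 : ℂ) := by
  have h1 : HasFDerivAt (fun q : ℝ × ℝ × ℝ × ℝ => (q.2.1 : ℂ))
      (Complex.ofRealCLM.comp ((ContinuousLinearMap.fst ℝ ℝ (ℝ × ℝ)).comp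
        (ContinuousLinearMap.snd ℝ ℝ (ℝ × ℝ × ℝ)))) p :=
    Complex.ofRealCLM.hasFDerivAt.comp p (hasFDerivAt_snd.fst)
  have h2 := (h1.const_mul c).cexp
  rw [h2.fderiv]
  simp [mul_comm, mul_assoc, mul_left_comm]

theorem kodaira_thurston_dolbeault_ne_bott_chern (l : ℤ) (hl : l ≠ 0) :
    let b : ℝ := 4 * Real.pi * l
    let f : ℝ × ℝ × ℝ × ℝ → ℂ := fun _ => 0
    let g : ℝ × ℝ × ℝ × ℝ → ℂ :=
      fun p => Complex.exp (2 * (Real.pi : ℂ) * Complex.I * (l : ℂ) * (p.2.1 : ℂ))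
    -- σ = fφ̄¹ + gφ̄² is Dolbeault harmonic:
    ((∀ p, V1 f p + V2 b g p = 0) ∧
     (∀ p, -V2bar b f p + V1bar g p + ((b : ℂ)/4) * g p = 0)) ∧
    -- but σ is not Bott-Chern harmonic:
    ¬ ((∀ p, V1 f p = 0) ∧ (∀ p, V2 b g p = 0) ∧
       (∀ p, V1 g p - ((b : ℂ)/4) * g p = 0) ∧
       (∀ p, V2 b f p - ((b : ℂ)/4) * g p = 0) ∧
       (∀ p, -V2bar b f p + V1bar g p + ((b : ℂ)/4) * g p = 0)) := by
  intro b f g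
  have hg : ∀ (p v : ℝ × ℝ × ℝ × ℝ), fderiv ℝ g p v
      = g p * (2 * (Real.pi : ℂ) * Complex.I * (l : ℂ)) * (v.2.1 : ℂ) := by
    intro p v
    exact gderiv (2 * (Real.pi : ℂ) * Complex.I * (l : ℂ)) p v
  have hf : ∀ (p v : ℝ × ℝ × ℝ × ℝ), fderiv ℝ f p v = 0 := by
    intro p v; simp [f]
  have hb : (b : ℂ) = 4 * (Real.pi : ℂ) * (l : ℂ) := by
    simp [b]
  refine ⟨⟨?_, ?_⟩, ?_⟩
  · intro p
    simp only [V1, V2, pt, px, py, pz, hg, hf]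
    norm_num
  · intro p
    simp only [V1bar, V2bar, pt, px, py, pz, hg, hf, hb]
    norm_num
    rw [show Complex.I * (g p * (2 * (Real.pi : ℂ) * Complex.I * (l : ℂ)))
        = -(2 * (Real.pi : ℂ) * (l : ℂ)) * g p by
      ring_nf; rw [Complex.I_sq]; ring]
    ring
  · rintro ⟨-, -, -, h4, -⟩
    have := h4 (0, 0, 0, 0)
    simp only [V2, pt, px, py, pz, hf, hb, g] at this
    norm_num at this
    exact hl this
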